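/- Let V be an (n+1)-dimensional vector space over an algebraically closed field k of characteristic p containing F_{q^2}, and let β be a nonzero q-bic form on V. For 0 ≤ r < n/2, the Fano scheme F of (r+1)-dimensional isotropic subspaces of (V, β) is nonempty; equivalently, there exists an (r+1)-dimensional subspace U ⊆ V with β(u, u') = 0 for all u, u' ∈ U. -/

import Mathlib

open Module Polynomial Finset

lemma semilin_eigen {k : Type*} [Field k] [IsAlgClosed k]
    {V : Type*} [AddCommGroup V] [Module k V] [FiniteDimensional k V]
    {q : ℕ} (hq : 2 ≤ q) (T : V → V)
    (hTadd : ∀ x y, T (x + y) = T x + T y)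
    (hTsmul : ∀ (c : k) (x : V), T (c • x) = c ^ q • T x)
    (v₀ : V) (hv₀ : v₀ ≠ 0) :
    ∃ (w : V) (μ : k), w ≠ 0 ∧ T w = μ • w := by
  classical
  have hq0 : 0 < q := by omega
  set Th : V →+ V := AddMonoidHom.mk' T hTadd with hTh
  have hThT : ∀ x, Th x = T x := fun _ => rfl
  set u : ℕ → V := fun i => T^[i] v₀ with hu
  have hu0 : u 0 = v₀ := rfl
  have husucc : ∀ i, u (i + 1) = T (u i) := fun i => Function.iterate_succ_apply' T i v₀
  -- if no early relation, independence
  have hindep : ∀ nn : ℕ,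
      (∀ j, j < nn → u j ∉ Submodule.span k (Set.range fun i : Fin j => u i)) →
      LinearIndependent k (fun i : Fin nn => u i) := by
    intro nn
    induction nn with
    | zero => intro _; exact linearIndependent_empty_type
    | succ n ih =>
      intro h
      have heq : (fun i : Fin (n+1) => u i) = Fin.snoc (fun i : Fin n => u i) (u n) := by
        funext j
        refine Fin.lastCases ?_ ?_ j
        · simp
        · intro i; simp
      rw [heq, linearIndependent_fin_snoc]
      exact ⟨ih (fun j hj => h j (Nat.lt_succ_of_lt hj)), h n (Nat.lt_succ_self n)⟩
  have hex : ∃ i, u i ∈ Submodule.span k (Set.range fun j : Fin i => u j) := by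
    by_contra hc
    push_neg at hc
    have hcard := (hindep (finrank k V + 1) (fun j _ => hc j)).fintype_card_le_finrank
    simp at hcard
  obtain ⟨m, hPm, hmin⟩ : ∃ m, (u m ∈ Submodule.span k (Set.range fun j : Fin m => u j)) ∧
      ∀ j, j < m → u j ∉ Submodule.span k (Set.range fun i : Fin j => u i) :=
    ⟨Nat.find hex, Nat.find_spec hex, fun j hj => Nat.find_min hex hj⟩
  have hm0 : 0 < m := by
    rcases Nat.eq_zero_or_pos m with h | h
    · exfalso
      rw [h] at hPm
      have : (Set.range fun j : Fin 0 => u ↑j) = ∅ := Set.range_eq_empty _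
      rw [this, Submodule.span_empty, Submodule.mem_bot] at hPm
      exact hv₀ (by rwa [hu0] at hPm)
    · exact h
  obtain ⟨b, hb⟩ := (Submodule.mem_span_range_iff_exists_fun k).mp hPm
  set b' : ℕ → k := fun i => if h : i < m then b ⟨i, h⟩ else 0 with hb'
  have hbsum : ∑ i ∈ range m, b' i • u i = u m := by
    rw [Finset.sum_range (fun i => b' i • u i), ← hb]
    refine Finset.sum_congr rfl (fun i _ => ?_)
    simp [hb']
  -- helper: membership in early span
  have hspan_mem : ∀ (mm : ℕ) (cc : ℕ → k), (∑ i ∈ range mm, cc i • u i) ∈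
      Submodule.span k (Set.range fun j : Fin mm => u j) := by
    intro mm cc
    refine Submodule.sum_mem _ (fun i hi => ?_)
    refine Submodule.smul_mem _ _ (Submodule.subset_span ?_)
    exact ⟨⟨i, Finset.mem_range.mp hi⟩, rfl⟩
  -- T of a combination
  have hTsum : ∀ (mm : ℕ) (cc : ℕ → k),
      T (∑ i ∈ range mm, cc i • u i) = ∑ i ∈ range mm, (cc i) ^ q • u (i+1) := by
    intro mm cc
    rw [← hThT, map_sum]
    refine Finset.sum_congr rfl (fun i _ => ?_)
    rw [hThT, hTsmul, husucc]
  rcases Nat.lt_or_ge m 2 with hm1 | hm2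
  · -- m = 1
    have hm1' : m = 1 := by omega
    refine ⟨v₀, b' 0, hv₀, ?_⟩
    have := hbsum
    rw [hm1'] at this
    simp [hu0] at this
    have h1 : T v₀ = u 1 := by rw [husucc 0, hu0]
    rw [h1, ← this]
  · -- m ≥ 2
    by_cases hb0 : b' 0 = 0
    · -- nilpotent-ish case: eigenvalue 0
      have hroots : ∀ i : ℕ, ∃ z : k, z ^ q = b' i := fun i =>
        IsAlgClosed.exists_pow_nat_eq (b' i) hq0
      choose r hr using hroots
      set w : V := u (m-1) - ∑ i ∈ range (m-1), r (i+1) • u i with hw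
      have hTw : T w = (0 : k) • w := by
        rw [hw, zero_smul]
        have h1 : T (u (m-1) - ∑ i ∈ range (m-1), r (i+1) • u i)
            = T (u (m-1)) - T (∑ i ∈ range (m-1), r (i+1) • u i) := by
          rw [← hThT, ← hThT, ← hThT, map_sub]
        rw [h1, hTsum, ← husucc]
        have hm1eq : m - 1 + 1 = m := by omega
        rw [hm1eq]
        have h2 : ∑ i ∈ range (m-1), r (i+1) ^ q • u (i+1) = ∑ i ∈ range (m-1), b' (i+1) • u (i+1) := by
          refine Finset.sum_congr rfl (fun i _ => by rw [hr])
        rw [h2, sub_eq_zero, ← hbsum]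
        have := Finset.sum_range_succ' (fun i => b' i • u i) (m-1)
        rw [hm1eq] at this
        rw [this, hb0, zero_smul, add_zero]
      have hwne : w ≠ 0 := by
        intro h0
        apply hmin (m-1) (by omega)
        rw [hw, sub_eq_zero] at h0
        rw [h0]
        exact hspan_mem _ _
      exact ⟨w, 0, hwne, hTw⟩
    · -- generic case
      obtain ⟨m', rfl⟩ : ∃ m', m = m' + 2 := ⟨m - 2, by omega⟩
      set D : ℕ → ℕ := fun i => Nat.rec 1 (fun _ ih => q * ih + 1) i with hD
      have hD0 : D 0 = 1 := rfl
      have hDs : ∀ i, D (i+1) = q * D i + 1 := fun _ => rfl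
      set Pl : ℕ → k[X] :=
        fun i => Nat.rec (C (b' 0)) (fun i ih => ih ^ q + C (b' (i+1)) * X ^ (q * D i)) i with hPl
      have hPl0 : Pl 0 = C (b' 0) := rfl
      have hPls : ∀ i, Pl (i+1) = Pl i ^ q + C (b' (i+1)) * X ^ (q * D i) := fun _ => rfl
      have hdegPl : ∀ i, (Pl i).natDegree + 1 ≤ D i := by
        intro i
        induction i with
        | zero => simp [hPl0, hD0]
        | succ n ih =>
          rw [hPls, hDs]
          have h1 : (Pl n ^ q).natDegree ≤ q * (Pl n).natDegree := natDegree_pow_le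
          have h2 : (C (b' (n+1)) * X ^ (q * D n)).natDegree ≤ q * D n := by
            refine le_trans (natDegree_C_mul_le _ _) ?_
            simp
          have h3 := natDegree_add_le (Pl n ^ q) (C (b' (n+1)) * X ^ (q * D n))
          have h4 : q * (Pl n).natDegree + q ≤ q * D n := by
            calc q * (Pl n).natDegree + q = q * ((Pl n).natDegree + 1) := by ring
            _ ≤ q * D n := Nat.mul_le_mul_left q ih
          omega
      have hDpos : ∀ i, 1 ≤ D i := by
        intro i
        induction i with
        | zero => simp [hD0]
        | succ n ih => rw [hDs]; omega
      have hPl0eval : ∀ i, (Pl i).eval 0 = b' 0 ^ q ^ i := by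
        intro i
        induction i with
        | zero => simp [hPl0]
        | succ n ih =>
          rw [hPls]
          have hqD : q * D n ≠ 0 := by
            have := hDpos n; positivity
          rw [eval_add, eval_pow, eval_mul, eval_pow, eval_X, eval_C, ih,
            zero_pow hqD, mul_zero, add_zero, ← pow_mul, ← pow_succ]
      set N := q * D m' with hN
      set G : k[X] := X ^ (N + 1) - Pl (m' + 1) with hG
      have hDm1 : D (m' + 1) = N + 1 := hDs m'
      have hdegPm : (Pl (m' + 1)).degree < ((N + 1 : ℕ) : WithBot ℕ) := by
        refine lt_of_le_of_lt degree_le_natDegree ?_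
        have := hdegPl (m' + 1)
        rw [hDm1] at this
        exact_mod_cast (by omega : (Pl (m' + 1)).natDegree < N + 1)
      have hdegG : G.degree = ((N + 1 : ℕ) : WithBot ℕ) := by
        rw [hG, degree_sub_eq_left_of_degree_lt (by rw [degree_X_pow]; exact hdegPm),
          degree_X_pow]
      have hGne : G.degree ≠ 0 := by
        rw [hdegG]
        intro hcon
        have h : (N + 1 : ℕ) = 0 := by exact_mod_cast hcon
        omega
      obtain ⟨lam, hroot⟩ := IsAlgClosed.exists_root G hGne
      have hGeval : lam ^ (N + 1) = (Pl (m' + 1)).eval lam := by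
        have h := hroot
        rw [hG] at h
        have h2 : eval lam (X ^ (N+1) - Pl (m'+1)) = 0 := h
        rw [eval_sub, eval_pow, eval_X, sub_eq_zero] at h2
        exact h2
      have hlam0 : lam ≠ 0 := by
        intro h0
        apply hb0
        have h1 : (0 : k) ^ (N + 1) = eval 0 (Pl (m' + 1)) := by rw [← h0]; exact hGeval
        rw [zero_pow (by omega : N + 1 ≠ 0), hPl0eval (m' + 1)] at h1
        exact (pow_eq_zero_iff (by positivity : q ^ (m' + 1) ≠ 0)).mp h1.symm
      set c : ℕ → k := fun i => Nat.rec (b' 0 * lam⁻¹) (fun i ih => (ih ^ q + b' (i+1)) * lam⁻¹) i with hc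
      have hc0 : c 0 = b' 0 * lam⁻¹ := rfl
      have hcs : ∀ i, c (i+1) = (c i ^ q + b' (i+1)) * lam⁻¹ := fun _ => rfl
      have hkey : ∀ i, c i * lam ^ (D i) = (Pl i).eval lam := by
        intro i
        induction i with
        | zero => rw [hc0, hD0, hPl0, eval_C, pow_one]; field_simp
        | succ n ih =>
          rw [hcs, hDs, hPls, eval_add, eval_pow, eval_mul, eval_pow, eval_X, eval_C, ← ih]
          have hpow : (c n * lam ^ D n) ^ q = c n ^ q * lam ^ (q * D n) := by
            rw [mul_pow, ← pow_mul, mul_comm (D n) q]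
          rw [hpow]
          field_simp
          ring
      have hcm1 : c (m' + 1) = 1 := by
        have h1 := hkey (m' + 1)
        rw [hDm1, ← hGeval] at h1
        have h2 : c (m' + 1) * lam ^ (N + 1) = 1 * lam ^ (N + 1) := by rw [h1, one_mul]
        exact mul_right_cancel₀ (pow_ne_zero _ hlam0) h2
      have hlc0 : lam * c 0 = b' 0 := by rw [hc0]; field_simp
      have hlcs : ∀ i, lam * c (i+1) = c i ^ q + b' (i+1) := by
        intro i
        rw [hcs]
        field_simp
      set w : V := ∑ i ∈ range (m' + 2), c i • u i with hw
      have hwne : w ≠ 0 := by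
        intro h0
        apply hmin (m' + 1) (by omega)
        rw [hw, Finset.sum_range_succ, hcm1, one_smul] at h0
        have h1 : u (m' + 1) = -∑ i ∈ range (m' + 1), c i • u i :=
          eq_neg_of_add_eq_zero_right h0
        rw [h1]
        exact Submodule.neg_mem _ (hspan_mem _ _)
      have hTw : T w = lam • w := by
        rw [hw, hTsum, Finset.smul_sum]
        have hRHS : ∑ i ∈ range (m' + 2), lam • (c i • u i)
            = ∑ i ∈ range (m' + 2), (lam * c i) • u i :=
          Finset.sum_congr rfl fun i _ => smul_smul _ _ _
        rw [hRHS, Finset.sum_range_succ (fun i => c i ^ q • u (i+1)) (m' + 1),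
          hcm1, one_pow, one_smul, ← hbsum,
          Finset.sum_range_succ' (fun i => b' i • u i) (m' + 1),
          Finset.sum_range_succ' (fun i => (lam * c i) • u i) (m' + 1), hlc0]
        have hmid : ∑ i ∈ range (m' + 1), (lam * c (i+1)) • u (i+1)
            = ∑ i ∈ range (m' + 1), (c i ^ q • u (i+1) + b' (i+1) • u (i+1)) := by
          refine Finset.sum_congr rfl fun i _ => ?_
          rw [hlcs, add_smul]
        rw [hmid, Finset.sum_add_distrib]
        abel
      exact ⟨w, lam, hwne, hTw⟩

universe u v

section Helpers

variable {k : Type u} [Field k] {V : Type v} [AddCommGroup V] [Module k V]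

lemma beta_zero_left (β : V → V → k)
    (haddl : ∀ u v w : V, β (u + v) w = β u w + β v w) (x : V) : β 0 x = 0 := by
  have h := haddl 0 0 x
  rw [add_zero] at h
  linear_combination -h

lemma beta_zero_right (β : V → V → k)
    (haddr : ∀ u v w : V, β u (v + w) = β u v + β u w) (x : V) : β x 0 = 0 := by
  have h := haddr x 0 0
  rw [add_zero] at h
  linear_combination -h

lemma beta_sub_left (β : V → V → k)
    (haddl : ∀ u v w : V, β (u + v) w = β u w + β v w) (x y z : V) :
    β (x - y) z = β x z - β y z := by
  have h := haddl (x - y) y z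
  rw [sub_add_cancel] at h
  linear_combination -h

lemma beta_sub_right (β : V → V → k)
    (haddr : ∀ u v w : V, β u (v + w) = β u v + β u w) (x y z : V) :
    β x (y - z) = β x y - β x z := by
  have h := haddr x (y - z) z
  rw [sub_add_cancel] at h
  linear_combination -h

/-- complement of a line inside a subspace -/
lemma compl_in [FiniteDimensional k V] (K : Submodule k V) (v : V) (hv : v ≠ 0) (hvK : v ∈ K) :
    ∃ W : Submodule k V, W ≤ K ∧ v ∉ W ∧ finrank k W + 1 = finrank k K := by
  obtain ⟨C, hC⟩ := Submodule.exists_isCompl (Submodule.span k {(⟨v, hvK⟩ : K)})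
  refine ⟨C.map K.subtype, Submodule.map_subtype_le K C, ?_, ?_⟩
  · intro hmem
    obtain ⟨x, hxC, hx⟩ := hmem
    have hxL : x ∈ Submodule.span k {(⟨v, hvK⟩ : K)} := by
      have hxv : x = ⟨v, hvK⟩ := Subtype.ext hx
      rw [hxv]; exact Submodule.mem_span_singleton_self _
    have hx0 : x = 0 := Submodule.disjoint_def.mp hC.disjoint x hxL hxC
    rw [hx0] at hx
    exact hv (by simpa using hx.symm)
  · have h1 := Submodule.finrank_add_eq_of_isCompl hC
    have h2 : ((⟨v, hvK⟩ : K) : V) ≠ 0 := by simpa using hv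
    rw [finrank_span_singleton (fun h => h2 (by rw [h]; rfl))] at h1
    rw [Submodule.finrank_map_subtype_eq]
    omega

end Helpers

section IsoVec

lemma exists_isotropic_vec {k : Type u} [Field k] [IsAlgClosed k]
    {V : Type v} [AddCommGroup V] [Module k V] [FiniteDimensional k V]
    {q : ℕ} (hq : 2 ≤ q) (β : V → V → k)
    (haddl : ∀ u v w : V, β (u + v) w = β u w + β v w)
    (haddr : ∀ u v w : V, β u (v + w) = β u v + β u w)
    (hsmull : ∀ (c : k) (u v : V), β (c • u) v = c ^ q * β u v)
    (hsmulr : ∀ (c : k) (u v : V), β u (c • v) = c * β u v)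
    (h2 : 2 ≤ finrank k V) :
    ∃ w : V, w ≠ 0 ∧ β w w = 0 := by
  classical
  set bb := Module.finBasis k V with hbb
  set v := bb ⟨0, by omega⟩ with hv
  set w := bb ⟨1, by omega⟩ with hw0
  have hf : Function.Injective (fun j : Fin 2 =>
      if j = 0 then (⟨0, by omega⟩ : Fin (finrank k V)) else ⟨1, by omega⟩) := by
    intro x y hxy
    fin_cases x <;> fin_cases y <;> simp_all
  have hpair := bb.linearIndependent.comp _ hf
  have hvw : ∀ a c : k, a • v + c • w = 0 → a = 0 ∧ c = 0 := by
    intro a c hac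
    have h := Fintype.linearIndependent_iff.mp hpair ![a, c] ?_
    · exact ⟨h 0, h 1⟩
    · rw [Fin.sum_univ_two]
      simpa using hac
  by_cases hww : β w w = 0
  · exact ⟨w, bb.ne_zero _, hww⟩
  · set f : k[X] := C (β v v) + C (β v w) * X + C (β w v) * X ^ q + C (β w w) * X ^ (q+1)
      with hfdef
    have hd1 : (C (β v v) + C (β v w) * X + C (β w v) * X ^ q).degree
        < ((q+1 : ℕ) : WithBot ℕ) := by
      refine lt_of_le_of_lt (degree_add_le _ _) ?_
      rw [max_lt_iff]
      constructor
      · refine lt_of_le_of_lt (degree_add_le _ _) ?_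
        rw [max_lt_iff]
        constructor
        · exact lt_of_le_of_lt degree_C_le (by exact_mod_cast Nat.succ_pos q)
        · refine lt_of_le_of_lt (degree_C_mul_X_le _) ?_
          exact_mod_cast (by omega : 1 < q + 1)
      · refine lt_of_le_of_lt (degree_C_mul_X_pow_le _ _) ?_
        exact_mod_cast (by omega : q < q + 1)
    have hdlast : (C (β w w) * X ^ (q+1)).degree = ((q+1 : ℕ) : WithBot ℕ) :=
      degree_C_mul_X_pow _ hww
    have hdeg : f.degree = ((q+1 : ℕ) : WithBot ℕ) := by
      rw [hfdef, degree_add_eq_right_of_degree_lt (by rw [hdlast]; exact hd1), hdlast]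
    obtain ⟨t, ht⟩ := IsAlgClosed.exists_root f (by
      rw [hdeg]
      intro hcon
      have h : (q + 1 : ℕ) = 0 := by exact_mod_cast hcon
      omega)
    have hev : β v v + β v w * t + β w v * t ^ q + β w w * t ^ (q+1) = 0 := by
      have h2' : eval t f = 0 := ht
      rw [hfdef] at h2'
      simpa [eval_add, eval_mul, eval_pow] using h2'
    refine ⟨v + t • w, ?_, ?_⟩
    · intro h0
      have h := hvw 1 t (by rw [one_smul]; exact h0)
      exact one_ne_zero h.1
    · have hexp : β (v + t • w) (v + t • w)
          = β v v + β v w * t + β w v * t ^ q + β w w * t ^ (q+1) := by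
        rw [haddl v (t • w) (v + t • w), haddr v v (t • w), haddr (t • w) v (t • w),
          hsmulr t v w, hsmull t w v, hsmull t w (t • w), hsmulr t w w]
        ring
      rw [hexp]
      exact hev

end IsoVec

section Peel

variable {k : Type u} [Field k] [IsAlgClosed k]

/-- codimension ≤ 1 for the right-kernel (q-twisted functional kernel) -/
lemma kr_codim {V : Type v} [AddCommGroup V] [Module k V] [FiniteDimensional k V]
    {q : ℕ} (hq : 2 ≤ q) (β : V → V → k)
    (haddl : ∀ u v w : V, β (u + v) w = β u w + β v w)
    (hsmull : ∀ (c : k) (u v : V), β (c • u) v = c ^ q * β u v)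
    (K : Submodule k V) (v : V) (hK : ∀ u, u ∈ K ↔ β u v = 0) :
    finrank k V ≤ finrank k K + 1 := by
  by_cases hKtop : K = ⊤
  · rw [hKtop, finrank_top]; omega
  · have hex : ∃ u₀ : V, u₀ ∉ K := by
      by_contra hc
      push_neg at hc
      exact hKtop (Submodule.eq_top_iff'.mpr hc)
    obtain ⟨u₀, hu₀⟩ := hex
    have ha : β u₀ v ≠ 0 := fun h => hu₀ ((hK u₀).mpr h)
    have htop : (⊤ : Submodule k V) ≤ K ⊔ Submodule.span k {u₀} := by
      intro u _
      obtain ⟨c, hc⟩ := IsAlgClosed.exists_pow_nat_eq (β u v * (β u₀ v)⁻¹) (n := q) (by omega)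
      have hmem : u - c • u₀ ∈ K := by
        rw [hK, beta_sub_left β haddl, hsmull, hc]
        field_simp
        simp
      have : (u - c • u₀) + c • u₀ ∈ K ⊔ Submodule.span k {u₀} :=
        Submodule.add_mem _ (Submodule.mem_sup_left hmem)
          (Submodule.mem_sup_right (Submodule.smul_mem _ c (Submodule.mem_span_singleton_self u₀)))
      rwa [sub_add_cancel] at this
    have hu₀0 : u₀ ≠ 0 := fun h => hu₀ (h ▸ K.zero_mem)
    have h1 := Submodule.finrank_sup_add_finrank_inf_eq K (Submodule.span k {u₀})
    have h2 : finrank k ↥(K ⊔ Submodule.span k {u₀}) = finrank k V := by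
      rw [top_le_iff.mp htop, finrank_top]
    rw [h2, finrank_span_singleton hu₀0] at h1
    omega

/-- the peeling lemma: find an isotropic vector together with a large
bi-orthogonal subspace not containing it -/
lemma peel {q : ℕ} (hq : 2 ≤ q)
    (ρ : k → k) (hρpow : ∀ x, ρ x ^ q = x)
    (hqinj : ∀ x y : k, x ^ q = y ^ q → x = y)
    (haddq : ∀ x y : k, (x + y) ^ q = x ^ q + y ^ q) :
    ∀ (n : ℕ) (V : Type v) [AddCommGroup V] [Module k V] [FiniteDimensional k V]
      (β : V → V → k),
      (∀ u v w : V, β (u + v) w = β u w + β v w) →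
      (∀ u v w : V, β u (v + w) = β u v + β u w) →
      (∀ (c : k) (u v : V), β (c • u) v = c ^ q * β u v) →
      (∀ (c : k) (u v : V), β u (c • v) = c * β u v) →
      finrank k V ≤ n + 2 → 2 ≤ finrank k V →
      ∃ (w : V) (W : Submodule k V), w ≠ 0 ∧ w ∉ W ∧ β w w = 0 ∧
        (∀ u ∈ W, β w u = 0 ∧ β u w = 0) ∧ finrank k V ≤ finrank k W + 2 := by
  -- derived facts about ρ
  have hρ0 : ρ 0 = 0 := hqinj _ _ (by rw [hρpow, zero_pow (by omega : q ≠ 0)])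
  have hρadd : ∀ x y : k, ρ (x + y) = ρ x + ρ y := fun x y =>
    hqinj _ _ (by rw [hρpow, haddq, hρpow, hρpow])
  have hρtw : ∀ x y : k, ρ (x ^ q * y) = x * ρ y := fun x y =>
    hqinj _ _ (by rw [hρpow, mul_pow, hρpow])
  have hρmul : ∀ x y : k, ρ (x * y) = ρ x * ρ y := fun x y =>
    hqinj _ _ (by rw [hρpow, mul_pow, hρpow, hρpow])
  have hρq : ∀ x : k, ρ (x ^ q) = x := fun x => hqinj _ _ (by rw [hρpow])
  have hρinj : ∀ x : k, ρ x = 0 → x = 0 := by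
    intro x hx
    have := hρpow x
    rw [hx, zero_pow (by omega : q ≠ 0)] at this
    exact this.symm
  intro n
  induction n with
  | zero =>
    intro V _ _ _ β haddl haddr hsmull hsmulr hle h2le
    obtain ⟨w, hw0, hww⟩ := exists_isotropic_vec hq β haddl haddr hsmull hsmulr h2le
    refine ⟨w, ⊥, hw0, by simpa using hw0, hww, ?_, by simpa using hle⟩
    intro u hu
    rw [Submodule.mem_bot] at hu
    subst hu
    exact ⟨beta_zero_right β haddr w, beta_zero_left β haddl w⟩
  | succ n ih =>
    intro V _ _ _ β haddl haddr hsmull hsmulr hle h2le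
    by_cases hsmall : finrank k V ≤ n + 2
    · exact ih V β haddl haddr hsmull hsmulr hsmall h2le
    · have hd : finrank k V = n + 3 := by omega
      classical
      -- the linear functional u ↦ β v u
      let A : V → Module.Dual k V := fun v =>
        { toFun := fun u => β v u
          map_add' := fun x y => haddr v x y
          map_smul' := fun c x => by simpa using hsmulr c v x }
      have hAapp : ∀ v u, A v u = β v u := fun _ _ => rfl
      have hAkercodim : ∀ v : V, finrank k V ≤ finrank k (LinearMap.ker (A v)) + 1 := by
        intro v
        have h1 := LinearMap.finrank_range_add_finrank_ker (A v)
        have h2 : finrank k (LinearMap.range (A v)) ≤ 1 := by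
          have := Submodule.finrank_le (LinearMap.range (A v))
          rwa [finrank_self] at this
        omega
      by_cases hcR : ∃ v : V, v ≠ 0 ∧ ∀ u : V, β u v = 0
      · -- right radical nontrivial
        obtain ⟨v, hv0, hvR⟩ := hcR
        have hvK : v ∈ LinearMap.ker (A v) := by
          rw [LinearMap.mem_ker]
          show β v v = 0
          exact hvR v
        obtain ⟨W, hWK, hvW, hWrank⟩ := compl_in (LinearMap.ker (A v)) v hv0 hvK
        refine ⟨v, W, hv0, hvW, hvR v, ?_, ?_⟩
        · intro u huW
          have huK := hWK huW
          rw [LinearMap.mem_ker] at huK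
          exact ⟨huK, hvR u⟩
        · have := hAkercodim v
          omega
      · by_cases hcL : ∃ v : V, v ≠ 0 ∧ ∀ u : V, β v u = 0
        · -- left radical nontrivial
          obtain ⟨v, hv0, hvL⟩ := hcL
          set KR : Submodule k V :=
            { carrier := {u | β u v = 0}
              add_mem' := fun {a b} ha hb => by
                simp only [Set.mem_setOf_eq] at *
                rw [haddl, ha, hb, add_zero]
              zero_mem' := by
                simp only [Set.mem_setOf_eq]
                exact beta_zero_left β haddl v
              smul_mem' := fun c a ha => by
                simp only [Set.mem_setOf_eq] at *
                rw [hsmull, ha, mul_zero] } with hKR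
          have hKRmem : ∀ u, u ∈ KR ↔ β u v = 0 := fun u => Iff.rfl
          have hcodim := kr_codim hq β haddl hsmull KR v hKRmem
          have hvKR : v ∈ KR := (hKRmem v).mpr (hvL v)
          obtain ⟨W, hWK, hvW, hWrank⟩ := compl_in KR v hv0 hvKR
          refine ⟨v, W, hv0, hvW, hvL v, ?_, by omega⟩
          intro u huW
          exact ⟨hvL u, (hKRmem u).mp (hWK huW)⟩
        · -- both radicals trivial: eigenvector argument
          push_neg at hcR hcL
          have hR : ∀ v : V, (∀ u : V, β u v = 0) → v = 0 := by
            intro v hv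
            by_contra h0
            obtain ⟨u, hu⟩ := hcR v h0
            exact hu (hv u)
          have hL : ∀ v : V, (∀ u : V, β v u = 0) → v = 0 := by
            intro v hv
            by_contra h0
            obtain ⟨u, hu⟩ := hcL v h0
            exact hu (hv u)
          -- the ρ-semilinear map B
          let B : V → Module.Dual k V := fun v =>
            { toFun := fun u => ρ (β u v)
              map_add' := fun x y => by
                show ρ (β (x + y) v) = ρ (β x v) + ρ (β y v)
                rw [haddl, hρadd]
              map_smul' := fun c x => by
                show ρ (β (c • x) v) = c * ρ (β x v)
                rw [hsmull, hρtw] }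
          have hBapp : ∀ v u, B v u = ρ (β u v) := fun _ _ => rfl
          have hBadd : ∀ x y : V, B (x + y) = B x + B y := by
            intro x y
            ext u
            simp only [LinearMap.add_apply, hBapp]
            rw [haddr, hρadd]
          have hBsmul : ∀ (c : k) (x : V), B (c • x) = ρ c • B x := by
            intro c x
            ext u
            simp only [LinearMap.smul_apply, hBapp, smul_eq_mul]
            rw [hsmulr, hρmul]
          set Bh : V →+ Module.Dual k V := AddMonoidHom.mk' B hBadd with hBh
          have hBhB : ∀ x, Bh x = B x := fun _ => rfl
          have hBinj0 : ∀ x : V, B x = 0 → x = 0 := by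
            intro x hx
            apply hR
            intro u
            apply hρinj
            have h1 := congrArg (fun φ : Module.Dual k V => φ u) hx
            simpa [hBapp] using h1
          have hBinj : ∀ x y : V, B x = B y → x = y := by
            intro x y hxy
            have h1 : B (x - y) = 0 := by
              rw [← hBhB, map_sub, hBhB, hBhB, hxy, sub_self]
            exact sub_eq_zero.mp (hBinj0 _ h1)
          -- surjectivity of B
          set bb := Module.finBasis k V with hbb
          set g : Fin (finrank k V) → Module.Dual k V := fun i => B (bb i) with hg
          have hBsum : ∀ (co : Fin (finrank k V) → k),
              B (∑ i, (co i) ^ q • bb i) = ∑ i, co i • g i := by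
            intro co
            rw [← hBhB, map_sum]
            refine Finset.sum_congr rfl fun i _ => ?_
            rw [hBhB, hBsmul, hρq, hg]
          have hgind : LinearIndependent k g := by
            rw [Fintype.linearIndependent_iff]
            intro co hco i
            have h1 : B (∑ j, (co j) ^ q • bb j) = 0 := by rw [hBsum]; exact hco
            have h2 := hBinj0 _ h1
            have h3 := Fintype.linearIndependent_iff.mp bb.linearIndependent _ h2 i
            exact pow_eq_zero_iff (by omega : q ≠ 0) |>.mp h3
          haveI : Nonempty (Fin (finrank k V)) := ⟨⟨0, by omega⟩⟩
          have hspan : Submodule.span k (Set.range g) = ⊤ :=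
            hgind.span_eq_top_of_card_eq_finrank (by
              simp [Fintype.card_fin, Subspace.dual_finrank_eq])
          have hBsurj : ∀ φ : Module.Dual k V, ∃ x, B x = φ := by
            intro φ
            have hφ : φ ∈ Submodule.span k (Set.range g) := by
              rw [hspan]; exact Submodule.mem_top
            obtain ⟨co, hco⟩ := (Submodule.mem_span_range_iff_exists_fun k).mp hφ
            exact ⟨∑ i, (co i) ^ q • bb i, by rw [hBsum]; exact hco⟩
          -- the q²-semilinear endomorphism T with B ∘ T = A
          set T : V → V := fun v => Classical.choose (hBsurj (A v)) with hT
          have hTspec : ∀ v, B (T v) = A v := fun v => Classical.choose_spec (hBsurj (A v))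
          have hAadd : ∀ x y : V, A (x + y) = A x + A y := by
            intro x y; ext u
            simp only [LinearMap.add_apply, hAapp]
            exact haddl x y u
          have hAsmul : ∀ (c : k) (x : V), A (c • x) = c ^ q • A x := by
            intro c x; ext u
            simp only [LinearMap.smul_apply, hAapp, smul_eq_mul]
            exact hsmull c x u
          have hTadd : ∀ x y : V, T (x + y) = T x + T y := by
            intro x y
            apply hBinj
            rw [hTspec, hBadd, hTspec, hTspec, hAadd]
          have hTsmul : ∀ (c : k) (x : V), T (c • x) = c ^ (q * q) • T x := by
            intro c x
            apply hBinj
            rw [hTspec, hBsmul, hTspec, hAsmul, pow_mul, hρq]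
          -- eigenvector
          have hfinpos : 0 < finrank k V := by omega
          haveI : Nontrivial V := Module.nontrivial_of_finrank_pos hfinpos
          obtain ⟨v₀, hv₀⟩ := exists_ne (0 : V)
          obtain ⟨vv, lam, hvv0, hvvlam⟩ :=
            semilin_eigen (le_trans hq (Nat.le_mul_of_pos_left q (by omega))) T hTadd hTsmul v₀ hv₀
          have hrel : ∀ u : V, β vv u = ρ lam * ρ (β u vv) := by
            intro u
            have h1 : A vv = ρ lam • B vv := by
              rw [← hTspec, hvvlam, hBsmul]
            have h2 := congrArg (fun φ : Module.Dual k V => φ u) h1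
            simpa [hAapp, hBapp, LinearMap.smul_apply, smul_eq_mul] using h2
          have hmu0 : ρ lam ≠ 0 := by
            intro h0
            apply hvv0
            apply hL
            intro u
            rw [hrel, h0, zero_mul]
          have hmatch : ∀ u : V, β vv u = 0 ↔ β u vv = 0 := by
            intro u
            constructor
            · intro h0
              rw [hrel] at h0
              rcases mul_eq_zero.mp h0 with h | h
              · exact absurd h hmu0
              · exact hρinj _ h
            · intro h0
              rw [hrel, h0, hρ0, mul_zero]
          set K := LinearMap.ker (A vv) with hKdef
          have hKmem : ∀ u, u ∈ K ↔ β vv u = 0 := fun u => LinearMap.mem_ker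
          by_cases hiso : β vv vv = 0
          · -- eigenvector is isotropic: done
            have hvvK : vv ∈ K := (hKmem vv).mpr hiso
            obtain ⟨W, hWK, hvW, hWrank⟩ := compl_in K vv hvv0 hvvK
            refine ⟨vv, W, hvv0, hvW, hiso, ?_, ?_⟩
            · intro u huW
              have h1 := (hKmem u).mp (hWK huW)
              exact ⟨h1, (hmatch u).mp h1⟩
            · have h9 := hAkercodim vv
              rw [← hKdef] at h9
              omega
          · -- eigenvector anisotropic: recurse inside K
            have hvvnK : vv ∉ K := fun h => hiso ((hKmem vv).mp h)
            have hKlt : finrank k K < finrank k V :=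
              Submodule.finrank_lt (
                (fun h : K = ⊤ => hvvnK (h ▸ Submodule.mem_top)))
            have hKrank : finrank k K = n + 2 := by
              have h9 := hAkercodim vv
              rw [← hKdef] at h9
              omega
            set β' : K → K → k := fun x y => β x y with hβ'
            obtain ⟨w', W', hw'0, hw'W', hw'iso, hw'orth, hw'rank⟩ :=
              ih K β'
                (fun u v w => by simp only [hβ', Submodule.coe_add]; exact haddl u v w)
                (fun u v w => by simp only [hβ', Submodule.coe_add]; exact haddr u v w)
                (fun c u v => by simp only [hβ', SetLike.val_smul]; exact hsmull c u v)
                (fun c u v => by simp only [hβ', SetLike.val_smul]; exact hsmulr c u v)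
                (by omega) (by omega)
            simp only [hβ'] at hw'iso hw'orth
            have hvvw'0 : β vv (w' : V) = 0 := (hKmem _).mp w'.2
            have hw'vv0 : β (w' : V) vv = 0 := (hmatch _).mp hvvw'0
            refine ⟨(w' : V), W'.map K.subtype ⊔ Submodule.span k {vv},
              fun h => hw'0 (by exact_mod_cast h), ?_, hw'iso, ?_, ?_⟩
            · -- w' not in the new subspace
              intro hmem
              obtain ⟨x, hx, y, hy, hxy⟩ := Submodule.mem_sup.mp hmem
              obtain ⟨t, rfl⟩ := Submodule.mem_span_singleton.mp hy
              obtain ⟨x', hx', rfl⟩ := Submodule.mem_map.mp hx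
              rw [Submodule.subtype_apply] at hxy
              have htv : t • vv ∈ K := by
                have h2 : t • vv = (w' : V) - (x' : V) := by
                  rw [← hxy]; abel
                rw [h2]
                exact Submodule.sub_mem _ w'.2 x'.2
              have ht0 : t = 0 := by
                by_contra ht
                apply hvvnK
                have h3 := Submodule.smul_mem K t⁻¹ htv
                rwa [smul_smul, inv_mul_cancel₀ ht, one_smul] at h3
              rw [ht0, zero_smul, add_zero] at hxy
              exact hw'W' ((Subtype.ext hxy : x' = w') ▸ hx')
            · -- orthogonality
              intro u hu
              obtain ⟨x, hx, y, hy, hxy⟩ := Submodule.mem_sup.mp hu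
              obtain ⟨t, rfl⟩ := Submodule.mem_span_singleton.mp hy
              obtain ⟨x', hx', rfl⟩ := Submodule.mem_map.mp hx
              rw [Submodule.subtype_apply] at hxy
              have horthx := hw'orth x' hx'
              constructor
              · rw [← hxy, haddr, hsmulr, horthx.1, hw'vv0, mul_zero, add_zero]
              · rw [← hxy, haddl, hsmull, horthx.2, hvvw'0, mul_zero, add_zero]
            · -- dimension bound
              have hinf : (W'.map K.subtype) ⊓ Submodule.span k {vv} = ⊥ := by
                rw [eq_bot_iff]
                intro x hx
                rw [Submodule.mem_inf] at hx
                obtain ⟨t, rfl⟩ := Submodule.mem_span_singleton.mp hx.2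
                rcases eq_or_ne t 0 with ht | ht
                · rw [ht, zero_smul]
                  exact Submodule.zero_mem ⊥
                · exfalso
                  apply hvvnK
                  have h3 := Submodule.smul_mem K t⁻¹
                    (Submodule.map_subtype_le K W' hx.1)
                  rwa [smul_smul, inv_mul_cancel₀ ht, one_smul] at h3
              have hsum := Submodule.finrank_sup_add_finrank_inf_eq
                (W'.map K.subtype) (Submodule.span k {vv})
              rw [hinf, finrank_bot, finrank_span_singleton hvv0,
                Submodule.finrank_map_subtype_eq] at hsum
              omega

end Peel

section MainLemma

variable {k : Type u} [Field k] [IsAlgClosed k]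

lemma main_lemma {q : ℕ} (hq : 2 ≤ q)
    (ρ : k → k) (hρpow : ∀ x, ρ x ^ q = x)
    (hqinj : ∀ x y : k, x ^ q = y ^ q → x = y)
    (haddq : ∀ x y : k, (x + y) ^ q = x ^ q + y ^ q) :
    ∀ (m : ℕ) (V : Type v) [AddCommGroup V] [Module k V] [FiniteDimensional k V]
      (β : V → V → k),
      (∀ u v w : V, β (u + v) w = β u w + β v w) →
      (∀ u v w : V, β u (v + w) = β u v + β u w) →
      (∀ (c : k) (u v : V), β (c • u) v = c ^ q * β u v) →
      (∀ (c : k) (u v : V), β u (c • v) = c * β u v) →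
      2 * m ≤ finrank k V →
      ∃ U : Submodule k V, finrank k U = m ∧ ∀ u ∈ U, ∀ u' ∈ U, β u u' = 0 := by
  intro m
  induction m with
  | zero =>
    intro V _ _ _ β haddl haddr hsmull hsmulr hrank
    refine ⟨⊥, finrank_bot k V, ?_⟩
    intro u hu u' hu'
    rw [Submodule.mem_bot] at hu
    subst hu
    exact beta_zero_left β haddl u'
  | succ m ih =>
    intro V _ _ _ β haddl haddr hsmull hsmulr hrank
    have h2le : 2 ≤ finrank k V := by omega
    obtain ⟨w, W, hw0, hwW, hwiso, horth, hWrank⟩ :=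
      peel hq ρ hρpow hqinj haddq (finrank k V) V β haddl haddr hsmull hsmulr (by omega) h2le
    set β' : W → W → k := fun x y => β x y with hβ'
    obtain ⟨U', hU'rank, hU'iso⟩ :=
      ih W β'
        (fun u v w => by simp only [hβ', Submodule.coe_add]; exact haddl u v w)
        (fun u v w => by simp only [hβ', Submodule.coe_add]; exact haddr u v w)
        (fun c u v => by simp only [hβ', SetLike.val_smul]; exact hsmull c u v)
        (fun c u v => by simp only [hβ', SetLike.val_smul]; exact hsmulr c u v)
        (by omega)
    simp only [hβ'] at hU'iso
    have hwnotmap : w ∉ U'.map W.subtype := fun h => hwW (Submodule.map_subtype_le W U' h)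
    refine ⟨U'.map W.subtype ⊔ Submodule.span k {w}, ?_, ?_⟩
    · have hinf : (U'.map W.subtype) ⊓ Submodule.span k {w} = ⊥ := by
        rw [eq_bot_iff]
        intro x hx
        rw [Submodule.mem_inf] at hx
        obtain ⟨t, rfl⟩ := Submodule.mem_span_singleton.mp hx.2
        rcases eq_or_ne t 0 with ht | ht
        · rw [ht, zero_smul]
          exact Submodule.zero_mem ⊥
        · exfalso
          apply hwnotmap
          have h3 := Submodule.smul_mem (U'.map W.subtype) t⁻¹ hx.1
          rwa [smul_smul, inv_mul_cancel₀ ht, one_smul] at h3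
      have hsum := Submodule.finrank_sup_add_finrank_inf_eq
        (U'.map W.subtype) (Submodule.span k {w})
      rw [hinf, finrank_bot, finrank_span_singleton hw0,
        Submodule.finrank_map_subtype_eq, hU'rank] at hsum
      omega
    · intro u hu u' hu'
      obtain ⟨x, hx, y, hy, hxy⟩ := Submodule.mem_sup.mp hu
      obtain ⟨t, rfl⟩ := Submodule.mem_span_singleton.mp hy
      obtain ⟨x', hx', rfl⟩ := Submodule.mem_map.mp hx
      obtain ⟨z, hz, y2, hy2, hxy2⟩ := Submodule.mem_sup.mp hu'
      obtain ⟨s, rfl⟩ := Submodule.mem_span_singleton.mp hy2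
      obtain ⟨z', hz', rfl⟩ := Submodule.mem_map.mp hz
      rw [Submodule.subtype_apply] at hxy hxy2
      rw [← hxy, ← hxy2,
        haddl (x' : V) (t • w) ((z' : V) + s • w),
        haddr (x' : V) (z' : V) (s • w),
        haddr (t • w) (z' : V) (s • w),
        hsmull t w (z' : V), hsmulr s (x' : V) w,
        hsmull t w (s • w), hsmulr s w w,
        hU'iso x' hx' z' hz', (horth (x' : V) x'.2).2, (horth (z' : V) z'.2).1, hwiso]
      ring

end MainLemma

/-- over an algebraically closed field, a nonzero q-bic form on an
(n+1)-dimensional space admits an (r+1)-dimensional totally isotropic subspace whenever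
0 ≤ r < n/2 (nonemptiness of the Fano scheme of r-planes). -/
theorem stmt_3 {p q ν n r : ℕ} [Fact p.Prime] (hν : 0 < ν) (hq : q = p ^ ν)
    {k : Type*} [Field k] [IsAlgClosed k] [CharP k p]
    {V : Type*} [AddCommGroup V] [Module k V] [FiniteDimensional k V]
    (hdim : Module.finrank k V = n + 1) (hr : 2 * r < n)
    (β : V → V → k)
    (haddl : ∀ u v w : V, β (u + v) w = β u w + β v w)
    (haddr : ∀ u v w : V, β u (v + w) = β u v + β u w)
    (hsmull : ∀ (c : k) (u v : V), β (c • u) v = c ^ q * β u v)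
    (hsmulr : ∀ (c : k) (u v : V), β u (c • v) = c * β u v)
    (hβne : ∃ v w : V, β v w ≠ 0) :
    ∃ U : Submodule k V, Module.finrank k U = r + 1 ∧
      ∀ u ∈ U, ∀ u' ∈ U, β u u' = 0 := by
  have hp2 : 2 ≤ p := (Fact.out : p.Prime).two_le
  have hq2 : 2 ≤ q := by
    calc 2 ≤ p := hp2
    _ = p ^ 1 := (pow_one p).symm
    _ ≤ p ^ ν := Nat.pow_le_pow_right (by omega) hν
    _ = q := hq.symm
  have hroot : ∀ z : k, ∃ x : k, x ^ q = z := fun z =>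
    IsAlgClosed.exists_pow_nat_eq z (by omega)
  choose ρ hρpow using hroot
  have hqinj : ∀ x y : k, x ^ q = y ^ q → x = y := by
    intro x y hxy
    have h := sub_pow_char_pow (R := k) (p := p) x y ν
    rw [← hq, hxy, sub_self] at h
    exact sub_eq_zero.mp (pow_eq_zero_iff (by omega : q ≠ 0) |>.mp h)
  have haddq : ∀ x y : k, (x + y) ^ q = x ^ q + y ^ q := by
    intro x y
    rw [hq]
    exact add_pow_char_pow (R := k) x y p ν
  exact main_lemma hq2 ρ hρpow hqinj haddq (r + 1) V β haddl haddr hsmull hsmulr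
    (by rw [hdim]; omega)
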